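/- Let f : ℝ^d → ℝ be differentiable, glocally (L, L_*, δ)-smooth, and μ-strongly convex with minimum value f_* attained at the unique minimizer w_*. Assume f(w₀) − f_* > δ > ε > 0. Let (w_t) be gradient-descent iterates with the Polyak step size: w_{t+1} = w_t − η_t∇f(w_t) where η_t = (f(w_t) − f_*)/‖∇f(w_t)‖² if ∇f(w_t) ≠ 0, and w_{t+1} = w_t otherwise. Then f(w_T) − f_* ≤ ε for every natural number T with T ≥ ⌈(4L/μ)log(L‖w₀ − w_*‖²/(2δ))⌉ + ⌈(4L_*/μ)log(L_*δ/(Lε))⌉. -/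

import Mathlib

set_option maxHeartbeats 1000000
open scoped RealInnerProductSpace Classical

abbrev Euc (d : ℕ) := EuclideanSpace ℝ (Fin d)

lemma curve_deriv {d : ℕ} (f : Euc d → ℝ) (f' : Euc d → Euc d)
    (hdiff : ∀ x, HasGradientAt f (f' x) x) (u c : Euc d) (t : ℝ) :
    HasDerivAt (fun s : ℝ => f (u + s • c)) ⟪f' (u + t • c), c⟫ t := by
  have hγd : HasDerivAt (fun s : ℝ => u + s • c) c t := by
    have h1 : HasDerivAt (fun s : ℝ => s • c) ((1:ℝ) • c) t := (hasDerivAt_id t).smul_const c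
    simpa using h1.const_add u
  have h2 := ((hdiff (u + t • c)).hasFDerivAt.comp_hasDerivAt t hγd)
  simpa [InnerProductSpace.toDual_apply_apply, Function.comp_def] using h2

lemma descent_segment {d : ℕ} (f : Euc d → ℝ) (f' : Euc d → Euc d)
    (hdiff : ∀ x, HasGradientAt f (f' x) x) (hcont : Continuous f')
    (u v : Euc d) (K : ℝ)
    (hseg : ∀ t ∈ Set.Icc (0:ℝ) 1, ‖f' (u + t • (v - u)) - f' u‖ ≤ K * t * ‖v - u‖) :
    f v ≤ f u + ⟪f' u, v - u⟫ + K / 2 * ‖v - u‖ ^ 2 := by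
  set γ : ℝ → Euc d := fun t => u + t • (v - u) with hγ
  have hφd : ∀ t : ℝ, HasDerivAt (fun s => f (γ s)) ⟪f' (γ t), v - u⟫ t := fun t =>
    curve_deriv f f' hdiff u (v - u) t
  have hcφ : Continuous fun t : ℝ => ⟪f' (γ t), v - u⟫ := by
    apply Continuous.inner
    · exact hcont.comp (by continuity)
    · exact continuous_const
  have hint : ∫ t in (0:ℝ)..1, ⟪f' (γ t), v - u⟫ = f (γ 1) - f (γ 0) :=
    intervalIntegral.integral_eq_sub_of_hasDerivAt (f := fun s => f (γ s))
      (f' := fun t => ⟪f' (γ t), v - u⟫) (fun t _ => hφd t) (hcφ.intervalIntegrable 0 1)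
  have hγ0 : γ 0 = u := by simp [hγ]
  have hγ1 : γ 1 = v := by simp [hγ]
  have hmono : ∫ t in (0:ℝ)..1, ⟪f' (γ t), v - u⟫ ≤
      ∫ t in (0:ℝ)..1, (⟪f' u, v - u⟫ + K * t * ‖v - u‖ ^ 2) := by
    apply intervalIntegral.integral_mono_on zero_le_one
    · exact hcφ.intervalIntegrable 0 1
    · exact Continuous.intervalIntegrable
        (continuous_const.add ((continuous_const.mul continuous_id').mul continuous_const)) 0 1
    · intro t ht
      have h1 : ⟪f' (γ t) - f' u, v - u⟫ ≤ ‖f' (γ t) - f' u‖ * ‖v - u‖ :=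
        real_inner_le_norm _ _
      have h2 := hseg t ht
      have h3 : ⟪f' (γ t), v - u⟫ = ⟪f' u, v - u⟫ + ⟪f' (γ t) - f' u, v - u⟫ := by
        rw [inner_sub_left]; ring
      rw [h3]
      have h4 : ⟪f' (γ t) - f' u, v - u⟫ ≤ K * t * ‖v - u‖ ^ 2 := by
        calc ⟪f' (γ t) - f' u, v - u⟫ ≤ ‖f' (γ t) - f' u‖ * ‖v - u‖ := h1
        _ ≤ (K * t * ‖v - u‖) * ‖v - u‖ := by
            apply mul_le_mul_of_nonneg_right h2 (norm_nonneg _)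
        _ = K * t * ‖v - u‖ ^ 2 := by ring
      linarith
  have hval : ∫ t in (0:ℝ)..1, (⟪f' u, v - u⟫ + K * t * ‖v - u‖ ^ 2)
      = ⟪f' u, v - u⟫ + K / 2 * ‖v - u‖ ^ 2 := by
    have hrw : (fun t : ℝ => ⟪f' u, v - u⟫ + K * t * ‖v - u‖ ^ 2)
        = fun t : ℝ => ⟪f' u, v - u⟫ + (K * ‖v - u‖ ^ 2) * t := by
      funext t; ring
    rw [hrw, intervalIntegral.integral_add (g := fun t : ℝ => (K * ‖v - u‖ ^ 2) * t) (intervalIntegrable_const)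
      ((continuous_const.mul continuous_id').intervalIntegrable 0 1),
      intervalIntegral.integral_const_mul]
    simp [integral_id]
    ring
  have h5 := hmono
  rw [hint, hγ0, hγ1, hval] at h5
  linarith

lemma descent_global {d : ℕ} (f : Euc d → ℝ) (f' : Euc d → Euc d) (L : ℝ) (hL : 0 < L)
    (hdiff : ∀ x, HasGradientAt f (f' x) x)
    (hglob : ∀ u v, ‖f' u - f' v‖ ≤ L * ‖u - v‖)
    (u v : Euc d) :
    f v ≤ f u + ⟪f' u, v - u⟫ + L / 2 * ‖v - u‖ ^ 2 := by
  have hcont : Continuous f' := by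
    have hlip : LipschitzWith (Real.toNNReal L) f' := by
      apply LipschitzWith.of_dist_le_mul
      intro x y
      rw [dist_eq_norm, dist_eq_norm]
      simpa [Real.coe_toNNReal L hL.le] using hglob x y
    exact hlip.continuous
  apply descent_segment f f' hdiff hcont u v L
  intro t ht
  have := hglob (u + t • (v - u)) u
  simpa [norm_smul, abs_of_nonneg ht.1, mul_assoc] using this

section
variable {d : ℕ} (f : Euc d → ℝ) (f' : Euc d → Euc d) (L Ls δ μ fstar : ℝ)

-- gradient vanishes at the minimizer
lemma grad_min_zero (hL : 0 < L)
    (hdiff : ∀ x, HasGradientAt f (f' x) x)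
    (hglob : ∀ u v, ‖f' u - f' v‖ ≤ L * ‖u - v‖)
    (wstar : Euc d) (hmin : ∀ x, f wstar ≤ f x) :
    f' wstar = 0 := by
  have h := descent_global f f' L hL hdiff hglob wstar (wstar - (L⁻¹) • f' wstar)
  have h2 : wstar - L⁻¹ • f' wstar - wstar = -(L⁻¹ • f' wstar) := by abel
  rw [h2] at h
  have h3 : ⟪f' wstar, -(L⁻¹ • f' wstar)⟫ = -(L⁻¹ * ‖f' wstar‖^2) := by
    rw [inner_neg_right, real_inner_smul_right, real_inner_self_eq_norm_sq]
  have h4 : ‖-(L⁻¹ • f' wstar)‖^2 = (L⁻¹)^2 * ‖f' wstar‖^2 := by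
    rw [norm_neg, norm_smul, Real.norm_eq_abs, abs_of_nonneg (inv_nonneg.mpr hL.le)]
    ring
  rw [h3, h4] at h
  have h5 := hmin (wstar - L⁻¹ • f' wstar)
  have h6 : L⁻¹ * ‖f' wstar‖^2 - L/2 * ((L⁻¹)^2 * ‖f' wstar‖^2) = ‖f' wstar‖^2 / (2*L) := by
    field_simp; ring
  have h7 : ‖f' wstar‖^2 / (2*L) ≤ 0 := by nlinarith
  have h8 : ‖f' wstar‖^2 ≤ 0 := by
    have := mul_le_mul_of_nonneg_right h7 (le_of_lt (by positivity : (0:ℝ) < 2*L))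
    rw [div_mul_cancel₀] at this
    · simpa using this
    · positivity
  have : ‖f' wstar‖ = 0 := by nlinarith [norm_nonneg (f' wstar)]
  simpa using this

-- convexity: value at convex combination
lemma cvx_comb (hsc : ∀ u v, f v ≥ f u + ⟪f' u, v - u⟫ + μ / 2 * ‖v - u‖ ^ 2)
    (hμ : 0 < μ) (u v : Euc d) (t : ℝ) (ht : t ∈ Set.Icc (0:ℝ) 1) :
    f (u + t • (v - u)) ≤ (1 - t) * f u + t * f v := by
  set x := u + t • (v - u) with hx
  have h1 : f u ≥ f x + ⟪f' x, u - x⟫ := by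
    have := hsc x u
    nlinarith [sq_nonneg ‖u - x‖, norm_nonneg (u - x)]
  have h2 : f v ≥ f x + ⟪f' x, v - x⟫ := by
    have := hsc x v
    nlinarith [sq_nonneg ‖v - x‖]
  have h3 : (1 - t) • (u - x) + t • (v - x) = 0 := by
    rw [hx]
    module
  have h4 : (1 - t) * ⟪f' x, u - x⟫ + t * ⟪f' x, v - x⟫ = 0 := by
    rw [← real_inner_smul_right, ← real_inner_smul_right, ← inner_add_right, h3, inner_zero_right]
  nlinarith [mul_le_mul_of_nonneg_left h1 (by linarith [ht.1, ht.2] : (0:ℝ) ≤ 1 - t),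
    mul_le_mul_of_nonneg_left h2 ht.1]

end
section
variable {d : ℕ} (f : Euc d → ℝ) (f' : Euc d → Euc d) (L Ls δ μ fstar : ℝ)

-- local descent lemma between two points of the sublevel set
lemma descent_local (hLs : 0 < Ls) (hμ : 0 < μ) (hδ : 0 ≤ δ)
    (hdiff : ∀ x, HasGradientAt f (f' x) x) (hcont : Continuous f')
    (hloc : ∀ u v, f u - fstar ≤ δ → f v - fstar ≤ δ → ‖f' u - f' v‖ ≤ Ls * ‖u - v‖)
    (hsc : ∀ u v, f v ≥ f u + ⟪f' u, v - u⟫ + μ / 2 * ‖v - u‖ ^ 2)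
    (u v : Euc d) (hu : f u - fstar ≤ δ) (hv : f v - fstar ≤ δ) :
    f v ≤ f u + ⟪f' u, v - u⟫ + Ls / 2 * ‖v - u‖ ^ 2 := by
  apply descent_segment f f' hdiff hcont u v Ls
  intro t ht
  have hmem : f (u + t • (v - u)) - fstar ≤ δ := by
    have := cvx_comb f f' μ hsc hμ u v t ht
    nlinarith [ht.1, ht.2]
  have := hloc (u + t • (v - u)) u hmem hu
  simpa [norm_smul, abs_of_nonneg ht.1, mul_assoc] using this

-- quadratic upper bound (global)
lemma quad_ub_global (hL : 0 < L)
    (hdiff : ∀ x, HasGradientAt f (f' x) x)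
    (hglob : ∀ u v, ‖f' u - f' v‖ ≤ L * ‖u - v‖)
    (wstar : Euc d) (hmin : ∀ x, f wstar ≤ f x) (x : Euc d) :
    f x - f wstar ≤ L / 2 * ‖x - wstar‖ ^ 2 := by
  have h := descent_global f f' L hL hdiff hglob wstar x
  rw [grad_min_zero f f' L hL hdiff hglob wstar hmin] at h
  simp only [inner_zero_left] at h
  linarith

-- strong convexity: lower quadratic bound
lemma quad_lb (hL : 0 < L)
    (hdiff : ∀ x, HasGradientAt f (f' x) x)
    (hglob : ∀ u v, ‖f' u - f' v‖ ≤ L * ‖u - v‖)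
    (hsc : ∀ u v, f v ≥ f u + ⟪f' u, v - u⟫ + μ / 2 * ‖v - u‖ ^ 2)
    (wstar : Euc d) (hmin : ∀ x, f wstar ≤ f x) (x : Euc d) :
    μ / 2 * ‖x - wstar‖ ^ 2 ≤ f x - f wstar := by
  have h := hsc wstar x
  rw [grad_min_zero f f' L hL hdiff hglob wstar hmin] at h
  simp only [inner_zero_left] at h
  linarith

-- strong convexity: inner product bound
lemma sc_inner (hsc : ∀ u v, f v ≥ f u + ⟪f' u, v - u⟫ + μ / 2 * ‖v - u‖ ^ 2)
    (wstar : Euc d) (x : Euc d) :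
    f x - f wstar + μ / 2 * ‖x - wstar‖ ^ 2 ≤ ⟪f' x, x - wstar⟫ := by
  have h := hsc x wstar
  have h2 : ⟪f' x, wstar - x⟫ = -⟪f' x, x - wstar⟫ := by
    rw [← inner_neg_right, neg_sub]
  rw [h2] at h
  have h3 : ‖wstar - x‖ = ‖x - wstar‖ := norm_sub_rev _ _
  rw [h3] at h
  linarith

-- global gradient norm bound
lemma gradsq_global (hL : 0 < L)
    (hdiff : ∀ x, HasGradientAt f (f' x) x)
    (hglob : ∀ u v, ‖f' u - f' v‖ ≤ L * ‖u - v‖)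
    (wstar : Euc d) (hmin : ∀ x, f wstar ≤ f x) (x : Euc d) :
    ‖f' x‖ ^ 2 ≤ 2 * L * (f x - f wstar) := by
  have h := descent_global f f' L hL hdiff hglob x (x - L⁻¹ • f' x)
  have h2 : x - L⁻¹ • f' x - x = -(L⁻¹ • f' x) := by abel
  rw [h2] at h
  have h3 : ⟪f' x, -(L⁻¹ • f' x)⟫ = -(L⁻¹ * ‖f' x‖^2) := by
    rw [inner_neg_right, real_inner_smul_right, real_inner_self_eq_norm_sq]
  have h4 : ‖-(L⁻¹ • f' x)‖^2 = (L⁻¹)^2 * ‖f' x‖^2 := by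
    rw [norm_neg, norm_smul, Real.norm_eq_abs, abs_of_nonneg (inv_nonneg.mpr hL.le)]
    ring
  rw [h3, h4] at h
  have h5 := hmin (x - L⁻¹ • f' x)
  have h6 : L⁻¹ * ‖f' x‖^2 - L/2 * ((L⁻¹)^2 * ‖f' x‖^2) = ‖f' x‖^2 / (2*L) := by
    field_simp; ring
  have h7 : f wstar ≤ f x - ‖f' x‖^2/(2*L) := by nlinarith
  have := mul_le_mul_of_nonneg_right (by linarith : ‖f' x‖^2/(2*L) ≤ f x - f wstar)
    (le_of_lt (by positivity : (0:ℝ) < 2*L))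
  rw [div_mul_cancel₀] at this
  · linarith
  · positivity

end
section
variable {d : ℕ} (f : Euc d → ℝ) (f' : Euc d → Euc d) (L Ls δ μ : ℝ)

-- points of the ball of radius sqrt(2δ/Ls) lie in the sublevel set
lemma ball_sublevel (hLs : 0 < Ls) (hμ : 0 < μ) (hδ : 0 < δ) (wstar : Euc d)
    (hdiff : ∀ x, HasGradientAt f (f' x) x) (hcont : Continuous f')
    (hloc : ∀ u v, f u - f wstar ≤ δ → f v - f wstar ≤ δ → ‖f' u - f' v‖ ≤ Ls * ‖u - v‖)
    (hsc : ∀ u v, f v ≥ f u + ⟪f' u, v - u⟫ + μ / 2 * ‖v - u‖ ^ 2)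
    (hgrad0 : f' wstar = 0)
    (x : Euc d) (hx : Ls / 2 * ‖x - wstar‖ ^ 2 ≤ δ) :
    f x - f wstar ≤ δ := by
  by_contra hcon
  push_neg at hcon
  have hfc : Continuous f := by
    apply continuous_iff_continuousAt.mpr
    intro y
    exact (hdiff y).differentiableAt.continuousAt
  set ψ : ℝ → ℝ := fun t => f (wstar + t • (x - wstar)) - f wstar with hψdef
  have hψc : Continuous ψ := by
    apply Continuous.sub _ continuous_const
    exact hfc.comp (by continuity)
  have hψ0 : ψ 0 = 0 := by simp [hψdef]
  have hψ1 : ψ 1 = f x - f wstar := by simp [hψdef]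
  have hIVT := intermediate_value_Icc (le_of_lt one_pos) hψc.continuousOn
  have hδmem : δ ∈ Set.Icc (ψ 0) (ψ 1) := by
    rw [hψ0, hψ1]; exact ⟨hδ.le, hcon.le⟩
  obtain ⟨t₀, ht₀, hψt₀⟩ := hIVT hδmem
  set y := wstar + t₀ • (x - wstar) with hy
  have hyδ : f y - f wstar = δ := hψt₀
  have hwδ : f wstar - f wstar ≤ δ := by simp [hδ.le]
  have hld := descent_local f f' Ls δ μ (f wstar) hLs hμ hδ.le hdiff hcont hloc hsc
    wstar y hwδ (le_of_eq hyδ)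
  rw [hgrad0, inner_zero_left] at hld
  have hyws : y - wstar = t₀ • (x - wstar) := by rw [hy]; abel
  have hnorm : ‖y - wstar‖ ^ 2 = t₀ ^ 2 * ‖x - wstar‖ ^ 2 := by
    rw [hyws, norm_smul, Real.norm_eq_abs, abs_of_nonneg ht₀.1, mul_pow]
  have h1 : δ ≤ Ls / 2 * (t₀ ^ 2 * ‖x - wstar‖ ^ 2) := by
    rw [← hnorm]; linarith
  have h2 : Ls / 2 * (t₀ ^ 2 * ‖x - wstar‖ ^ 2) ≤ t₀ ^ 2 * δ := by
    have := mul_le_mul_of_nonneg_left hx (sq_nonneg t₀)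
    nlinarith
  have ht2 : 1 ≤ t₀ ^ 2 := by nlinarith
  have ht3 : t₀ ^ 2 ≤ t₀ := by nlinarith [ht₀.1, ht₀.2]
  have ht1 : t₀ = 1 := le_antisymm ht₀.2 (by nlinarith)
  have hyx : y = x := by rw [hy, ht1]; simp
  rw [hyx] at hyδ
  linarith

-- key bound: gradient norm squared in the sublevel set
lemma gradsq_local (hLs : 0 < Ls) (hμ : 0 < μ) (hδ : 0 < δ) (wstar : Euc d)
    (hdiff : ∀ x, HasGradientAt f (f' x) x) (hcont : Continuous f')
    (hloc : ∀ u v, f u - f wstar ≤ δ → f v - f wstar ≤ δ → ‖f' u - f' v‖ ≤ Ls * ‖u - v‖)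
    (hsc : ∀ u v, f v ≥ f u + ⟪f' u, v - u⟫ + μ / 2 * ‖v - u‖ ^ 2)
    (hmin : ∀ x, f wstar ≤ f x)
    (x : Euc d) (hx : f x - f wstar ≤ δ) :
    ‖f' x‖ ^ 2 ≤ 2 * Ls * (f x - f wstar) := by
  by_cases hg : f' x = 0
  · rw [hg]
    simp only [norm_zero]
    nlinarith [hmin x]
  · set g := f' x with hgdef
    set ψ : ℝ → ℝ := fun s => f (x + s • (-g)) with hψdef
    have hψ0 : ψ 0 = f x := by simp [hψdef]
    have hfc : Continuous f := by
      apply continuous_iff_continuousAt.mpr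
      intro y
      exact (hdiff y).differentiableAt.continuousAt
    have hψc : Continuous ψ := hfc.comp (by continuity)
    have claim : ∀ s ∈ Set.Icc (0:ℝ) Ls⁻¹, ψ s ≤ f x := by
      by_contra hcl
      push_neg at hcl
      obtain ⟨s₀, hs₀I, hs₀⟩ := hcl
      set S : Set ℝ := {s | s ∈ Set.Icc (0:ℝ) Ls⁻¹ ∧ f x < ψ s} with hSdef
      have hS : S.Nonempty := ⟨s₀, hs₀I, hs₀⟩
      have hbdd : BddBelow S := ⟨0, fun s hs => hs.1.1⟩
      set b := sInf S with hbdef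
      have hb0 : 0 ≤ b := le_csInf hS (fun s hs => hs.1.1)
      have hbu : b ≤ Ls⁻¹ := le_trans (csInf_le hbdd hS.choose_spec) hS.choose_spec.1.2
      have hlt : ∀ s, 0 ≤ s → s < b → ψ s ≤ f x := by
        intro s hs0 hsb
        by_contra hpsi
        push_neg at hpsi
        have : s ∈ S := ⟨⟨hs0, le_trans hsb.le hbu⟩, hpsi⟩
        exact absurd (csInf_le hbdd this) (not_le.mpr hsb)
      have hψb : ψ b ≤ f x := by
        by_contra hpb
        push_neg at hpb
        have hbne : b ≠ 0 := by
          intro h0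
          rw [h0, hψ0] at hpb
          exact lt_irrefl _ hpb
        have hbpos : 0 < b := lt_of_le_of_ne hb0 (Ne.symm hbne)
        have hopen : IsOpen {s : ℝ | f x < ψ s} := isOpen_lt continuous_const hψc
        obtain ⟨η, hη, hball⟩ := Metric.isOpen_iff.mp hopen b hpb
        set s := b - min (η/2) (b/2) with hsdef
        have hmin2 : 0 < min (η/2) (b/2) := lt_min (by linarith) (by linarith)
        have hs1 : s < b := by
          rw [hsdef]; linarith
        have hs0 : 0 ≤ s := by
          have : min (η/2) (b/2) ≤ b/2 := min_le_right _ _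
          rw [hsdef]; linarith
        have hsball : s ∈ Metric.ball b η := by
          rw [Metric.mem_ball, Real.dist_eq, hsdef]
          have h1 : min (η/2) (b/2) ≤ η/2 := min_le_left _ _
          rw [abs_of_nonpos (by linarith)]
          linarith
        have hsS : s ∈ S := ⟨⟨hs0, le_trans hs1.le hbu⟩, hball hsball⟩
        exact absurd (csInf_le hbdd hsS) (not_le.mpr hs1)
      have hbl : b < Ls⁻¹ := by
        rcases lt_or_eq_of_le hbu with h | h
        · exact h
        · exfalso
          obtain ⟨s₁, hs₁⟩ := hS
          have h1 : b ≤ s₁ := csInf_le hbdd hs₁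
          have h2 : s₁ ≤ Ls⁻¹ := hs₁.1.2
          have : s₁ = b := by rw [h]; linarith
          rw [this] at hs₁
          exact absurd hψb (not_le.mpr hs₁.2)
      have hinset : ∀ s, 0 ≤ s → s ≤ b → f (x + s • (-g)) - f wstar ≤ δ := by
        intro s hs0 hsb
        rcases lt_or_eq_of_le hsb with h | h
        · have := hlt s hs0 h
          have h2 : f (x + s • (-g)) ≤ f x := this
          linarith
        · rw [h]
          have h2 : f (x + b • (-g)) ≤ f x := hψb
          linarith
      have hD := curve_deriv f f' hdiff x (-g) b
      have hxb_in : f (x + b • (-g)) - f wstar ≤ δ := hinset b hb0 le_rfl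
      have hgpos : 0 < ‖g‖ := norm_pos_iff.mpr hg
      have hDneg : ⟪f' (x + b • (-g)), -g⟫ < 0 := by
        have hlip := hloc x (x + b • (-g)) hx hxb_in
        have hnx : ‖x - (x + b • (-g))‖ = b * ‖g‖ := by
          have : x - (x + b • (-g)) = b • g := by module
          rw [this, norm_smul, Real.norm_eq_abs, abs_of_nonneg hb0]
        rw [hnx] at hlip
        have hsplit : ⟪f' (x + b • (-g)), -g⟫ = -‖g‖^2 + ⟪f' (x + b • (-g)) - g, -g⟫ := by
          rw [inner_sub_left]
          have : ⟪g, -g⟫ = -‖g‖^2 := by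
            rw [inner_neg_right, real_inner_self_eq_norm_sq]
          rw [this]; ring
        have hcs : ⟪f' (x + b • (-g)) - g, -g⟫ ≤ ‖f' (x + b • (-g)) - g‖ * ‖g‖ := by
          have := real_inner_le_norm (f' (x + b • (-g)) - g) (-g)
          rwa [norm_neg] at this
        have hnormsym : ‖f' (x + b • (-g)) - g‖ = ‖f' x - f' (x + b • (-g))‖ := by
          rw [hgdef, norm_sub_rev]
        have hb1 : Ls * b < 1 := by
          calc Ls * b < Ls * Ls⁻¹ := mul_lt_mul_of_pos_left hbl hLs
          _ = 1 := mul_inv_cancel₀ hLs.ne'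
        calc ⟪f' (x + b • (-g)), -g⟫ = -‖g‖^2 + ⟪f' (x + b • (-g)) - g, -g⟫ := hsplit
        _ ≤ -‖g‖^2 + Ls * (b * ‖g‖) * ‖g‖ := by
            have := le_trans hcs (mul_le_mul_of_nonneg_right (hnormsym ▸ hlip) (norm_nonneg g))
            linarith
        _ = -(1 - Ls * b) * ‖g‖^2 := by ring
        _ < 0 := by
            have hq : (0:ℝ) < (1 - Ls * b) * ‖g‖^2 :=
              mul_pos (by linarith) (by positivity)
            linarith
      have hslope := hasDerivAt_iff_tendsto_slope.mp hD
      have hmono : (nhdsWithin b (Set.Ioi b)) ≤ (nhdsWithin b {b}ᶜ) :=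
        nhdsWithin_mono b (fun s hs => ne_of_gt hs)
      have hev : ∀ᶠ s in nhdsWithin b (Set.Ioi b), slope ψ b s < 0 :=
        (hslope.mono_left hmono).eventually_lt_const hDneg
      obtain ⟨u, hu, hIoo⟩ := mem_nhdsGT_iff_exists_Ioo_subset.mp hev
      obtain ⟨s₁, hs₁S, hs₁u⟩ := exists_lt_of_csInf_lt hS (show sInf S < u from hu)
      have hs₁b : b ≤ s₁ := csInf_le hbdd hs₁S
      have hs₁ne : b ≠ s₁ := by
        intro h
        rw [← h] at hs₁S
        exact absurd hψb (not_le.mpr hs₁S.2)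
      have hs₁Ioo : s₁ ∈ Set.Ioo b u := ⟨lt_of_le_of_ne hs₁b hs₁ne, hs₁u⟩
      have hsl2 : slope ψ b s₁ < 0 := hIoo hs₁Ioo
      have hpos : 0 < s₁ - b := by linarith [hs₁Ioo.1]
      rw [slope_def_field] at hsl2
      have h9 : ψ s₁ - ψ b < 0 := by
        by_contra hge
        push_neg at hge
        exact absurd (div_nonneg hge hpos.le) (not_le.mpr hsl2)
      have : ψ s₁ < ψ b := by linarith
      linarith [hs₁S.2, hψb]
    -- use the claim
    have hvset : f (x + Ls⁻¹ • (-g)) - f wstar ≤ δ := by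
      have := claim Ls⁻¹ ⟨inv_nonneg.mpr hLs.le, le_rfl⟩
      linarith
    have hld := descent_local f f' Ls δ μ (f wstar) hLs hμ hδ.le hdiff hcont hloc hsc
      x (x + Ls⁻¹ • (-g)) hx hvset
    have hvx : x + Ls⁻¹ • (-g) - x = -(Ls⁻¹ • g) := by module
    rw [hvx] at hld
    have h3 : ⟪g, -(Ls⁻¹ • g)⟫ = -(Ls⁻¹ * ‖g‖^2) := by
      rw [inner_neg_right, real_inner_smul_right, real_inner_self_eq_norm_sq]
    have h4 : ‖-(Ls⁻¹ • g)‖^2 = (Ls⁻¹)^2 * ‖g‖^2 := by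
      rw [norm_neg, norm_smul, Real.norm_eq_abs, abs_of_nonneg (inv_nonneg.mpr hLs.le)]
      ring
    rw [h3, h4] at hld
    have h5 := hmin (x + Ls⁻¹ • (-g))
    have h6 : Ls⁻¹ * ‖g‖^2 - Ls/2 * ((Ls⁻¹)^2 * ‖g‖^2) = ‖g‖^2 / (2*Ls) := by
      field_simp; ring
    have h7 : ‖g‖^2/(2*Ls) ≤ f x - f wstar := by nlinarith
    have := mul_le_mul_of_nonneg_right h7 (le_of_lt (by positivity : (0:ℝ) < 2*Ls))
    rw [div_mul_cancel₀] at this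
    · linarith
    · positivity

end
section
variable {d : ℕ}

lemma step_contract (f : Euc d → ℝ) (f' : Euc d → Euc d) (μ M fstar : ℝ)
    (hμ : 0 < μ) (hM : 0 < M) (wstar : Euc d) (hfw : f wstar = fstar)
    (hsc : ∀ u v, f v ≥ f u + ⟪f' u, v - u⟫ + μ / 2 * ‖v - u‖ ^ 2)
    (wt wt1 : Euc d)
    (hstep : wt1 = if f' wt = 0 then wt
        else wt - ((f wt - fstar) / ‖f' wt‖ ^ 2) • f' wt)
    (hlb : μ / 2 * ‖wt - wstar‖ ^ 2 ≤ f wt - fstar)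
    (hgb : ‖f' wt‖ ^ 2 ≤ 2 * M * (f wt - fstar)) :
    ‖wt1 - wstar‖ ^ 2 ≤ (1 - μ / (4 * M)) * ‖wt - wstar‖ ^ 2 := by
  have hin := sc_inner f f' μ hsc wstar wt
  rw [hfw] at hin
  by_cases hg : f' wt = 0
  · rw [if_pos hg] at hstep
    rw [hg, inner_zero_left] at hin
    have hr0 : ‖wt - wstar‖ ^ 2 = 0 := by nlinarith [sq_nonneg ‖wt - wstar‖]
    rw [hstep, hr0]
    linarith
  · rw [if_neg hg] at hstep
    have hΔ0 : 0 ≤ f wt - fstar := le_trans (by positivity) hlb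
    have hgm : 0 < ‖f' wt‖ ^ 2 := pow_pos (norm_pos_iff.mpr hg) 2
    set Δ := f wt - fstar with hΔdef
    set g := f' wt with hgdef
    set a := wt - wstar with hadef
    set η := Δ / ‖g‖ ^ 2 with hηdef
    have hη0 : 0 ≤ η := div_nonneg hΔ0 hgm.le
    clear_value Δ g a η
    have hw : wt1 - wstar = a - η • g := by
      rw [hstep, hadef]; abel
    have hexp : ‖a - η • g‖ ^ 2 = ‖a‖ ^ 2 - 2 * (η * ⟪g, a⟫) + η ^ 2 * ‖g‖ ^ 2 := by
      rw [norm_sub_sq_real, real_inner_smul_right, real_inner_comm, norm_smul,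
        Real.norm_eq_abs, abs_of_nonneg hη0, mul_pow]
    have hnn : (0:ℝ) ≤ μ / 2 * ‖a‖ ^ 2 := by positivity
    have hinner : Δ ≤ ⟪g, a⟫ := by linarith
    have b1 : η ^ 2 * ‖g‖ ^ 2 = Δ ^ 2 / ‖g‖ ^ 2 := by
      rw [hηdef]; field_simp
    have b2 : η * Δ ≤ η * ⟪g, a⟫ := mul_le_mul_of_nonneg_left hinner hη0
    have b3 : η * Δ = Δ ^ 2 / ‖g‖ ^ 2 := by
      rw [hηdef]; field_simp
    have hmain : ‖a - η • g‖ ^ 2 ≤ ‖a‖ ^ 2 - Δ ^ 2 / ‖g‖ ^ 2 := by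
      rw [hexp, b1]; linarith [b2, b3]
    have key1 : μ / (4 * M) * ‖a‖ ^ 2 ≤ Δ / (2 * M) := by
      have e5 : μ / (4 * M) * ‖a‖ ^ 2 = (μ / 2 * ‖a‖ ^ 2) * (1 / (2 * M)) := by
        field_simp
        ring_nf
      have e6 : Δ / (2 * M) = Δ * (1 / (2 * M)) := by ring
      rw [e5, e6]
      exact mul_le_mul_of_nonneg_right hlb (by positivity)
    have key2 : Δ / (2 * M) ≤ Δ ^ 2 / ‖g‖ ^ 2 := by
      rw [div_le_div_iff₀ (by positivity) hgm]
      nlinarith [mul_le_mul_of_nonneg_left hgb hΔ0]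
    rw [hw]
    calc ‖a - η • g‖ ^ 2 ≤ ‖a‖ ^ 2 - Δ ^ 2 / ‖g‖ ^ 2 := hmain
    _ ≤ ‖a‖ ^ 2 - μ / (4 * M) * ‖a‖ ^ 2 := by linarith
    _ = (1 - μ / (4 * M)) * ‖a‖ ^ 2 := by ring

end
/-- Iteration complexity of gradient descent with the Polyak step size
under glocal (L, L_*, δ)-smoothness and μ-strong convexity. -/
theorem gd_polyak_glocal_complexity {d : ℕ}
    (f : EuclideanSpace ℝ (Fin d) → ℝ)
    (f' : EuclideanSpace ℝ (Fin d) → EuclideanSpace ℝ (Fin d))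
    (L Ls δ ε μ fstar : ℝ)
    (hL : 0 < L) (hLs : 0 < Ls) (hμ : 0 < μ)
    (hdiff : ∀ x, HasGradientAt f (f' x) x)
    (hglob : ∀ u v, ‖f' u - f' v‖ ≤ L * ‖u - v‖)
    (hloc : ∀ u v, f u - fstar ≤ δ → f v - fstar ≤ δ → ‖f' u - f' v‖ ≤ Ls * ‖u - v‖)
    (hsc : ∀ u v, f v ≥ f u + ⟪f' u, v - u⟫ + μ / 2 * ‖v - u‖ ^ 2)
    (wstar : EuclideanSpace ℝ (Fin d))
    (hwstar : f wstar = fstar ∧ ∀ x, fstar ≤ f x)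
    (w : ℕ → EuclideanSpace ℝ (Fin d))
    (hΔδ : f (w 0) - fstar > δ) (hδε : δ > ε) (hε : ε > 0)
    (hstep : ∀ t : ℕ,
      w (t + 1) = if f' (w t) = 0 then w t
        else w t - ((f (w t) - fstar) / ‖f' (w t)‖ ^ 2) • f' (w t)) :
    ∀ T : ℕ,
      (⌈4 * L / μ * Real.log (L * ‖w 0 - wstar‖ ^ 2 / (2 * δ))⌉ +
        ⌈4 * Ls / μ * Real.log (Ls * δ / (L * ε))⌉ : ℤ) ≤ T →
      f (w T) - fstar ≤ ε := by
  intro T hT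
  obtain ⟨hfw, hminf⟩ := hwstar
  have hδpos : 0 < δ := lt_trans hε hδε
  have hmin : ∀ x, f wstar ≤ f x := fun x => by rw [hfw]; exact hminf x
  have hcont : Continuous f' := by
    have hlip : LipschitzWith (Real.toNNReal L) f' := by
      apply LipschitzWith.of_dist_le_mul
      intro x y
      rw [dist_eq_norm, dist_eq_norm]
      simpa [Real.coe_toNNReal L hL.le] using hglob x y
    exact hlip.continuous
  have hgrad0 : f' wstar = 0 := grad_min_zero f f' L hL hdiff hglob wstar hmin
  have hloc' : ∀ u v, f u - f wstar ≤ δ → f v - f wstar ≤ δ →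
      ‖f' u - f' v‖ ≤ Ls * ‖u - v‖ := by
    rw [hfw]; exact hloc
  set R := ‖w 0 - wstar‖ ^ 2 with hRdef
  have hΔ0' : δ < f (w 0) - f wstar := by rw [hfw]; exact hΔδ
  have hR2 : δ < Ls / 2 * R := by
    by_contra hcon
    push_neg at hcon
    exact absurd (ball_sublevel f f' Ls δ μ hLs hμ hδpos wstar hdiff hcont hloc' hsc
      hgrad0 (w 0) hcon) (not_le.mpr hΔ0')
  have hRpos : 0 < R := by nlinarith
  set lL := Real.log L with hlLdef
  set lS := Real.log Ls with hlSdef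
  set lR := Real.log R with hlRdef
  set l2 := Real.log 2 with hl2def
  set lδ := Real.log δ with hlδdef
  set lε := Real.log ε with hlεdef
  have e₁ : Real.log (L * R / (2 * δ)) = lL + lR - (l2 + lδ) := by
    rw [hlLdef, hlRdef, hl2def, hlδdef,
      Real.log_div (by positivity) (by positivity),
      Real.log_mul (ne_of_gt hL) (ne_of_gt hRpos),
      Real.log_mul (two_ne_zero) (ne_of_gt hδpos)]
  have e₂ : Real.log (Ls * δ / (L * ε)) = lS + lδ - (lL + lε) := by
    rw [hlSdef, hlδdef, hlLdef, hlεdef,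
      Real.log_div (by positivity) (by positivity),
      Real.log_mul (ne_of_gt hLs) (ne_of_gt hδpos),
      Real.log_mul (ne_of_gt hL) (ne_of_gt hε)]
  have e₃ : Real.log (Ls * R / (2 * δ)) = lS + lR - (l2 + lδ) := by
    rw [hlSdef, hlRdef, hl2def, hlδdef,
      Real.log_div (by positivity) (by positivity),
      Real.log_mul (ne_of_gt hLs) (ne_of_gt hRpos),
      Real.log_mul (two_ne_zero) (ne_of_gt hδpos)]
  have e₅ : Real.log (Ls * R / (2 * ε)) = lS + lR - (l2 + lε) := by
    rw [hlSdef, hlRdef, hl2def, hlεdef,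
      Real.log_div (by positivity) (by positivity),
      Real.log_mul (ne_of_gt hLs) (ne_of_gt hRpos),
      Real.log_mul (two_ne_zero) (ne_of_gt hε)]
  have hlog_εδ : lε < lδ := Real.log_lt_log hε hδε
  have hy₁pos : 0 < lS + lR - (l2 + lδ) := by
    rw [← e₃]
    exact Real.log_pos ((one_lt_div (by positivity)).mpr (by linarith))
  set x₁ := 4 * L / μ * Real.log (L * R / (2 * δ)) with hx₁def
  set x₂ := 4 * Ls / μ * Real.log (Ls * δ / (L * ε)) with hx₂def
  have hTr : (⌈x₁⌉ : ℝ) + (⌈x₂⌉ : ℝ) ≤ (T : ℝ) := by exact_mod_cast hT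
  -- contraction steps
  have hΦglob : ∀ t, ‖w (t+1) - wstar‖ ^ 2 ≤ (1 - μ/(4*L)) * ‖w t - wstar‖ ^ 2 := by
    intro t
    apply step_contract f f' μ L fstar hμ hL wstar hfw hsc (w t) (w (t+1)) (hstep t)
    · have := quad_lb f f' L μ hL hdiff hglob hsc wstar hmin (w t)
      rw [hfw] at this; exact this
    · have := gradsq_global f f' L hL hdiff hglob wstar hmin (w t)
      rw [hfw] at this; exact this
  have hΦloc : ∀ t, f (w t) - f wstar ≤ δ →
      ‖w (t+1) - wstar‖ ^ 2 ≤ (1 - μ/(4*Ls)) * ‖w t - wstar‖ ^ 2 := by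
    intro t ht
    apply step_contract f f' μ Ls fstar hμ hLs wstar hfw hsc (w t) (w (t+1)) (hstep t)
    · have := quad_lb f f' L μ hL hdiff hglob hsc wstar hmin (w t)
      rw [hfw] at this; exact this
    · have := gradsq_local f f' Ls δ μ hLs hμ hδpos wstar hdiff hcont hloc' hsc hmin
        (w t) ht
      rw [hfw] at this; exact this
  have hqL : (1 - μ/(4*L)) ≤ Real.exp (-(μ/(4*L))) := by
    linarith [Real.add_one_le_exp (-(μ/(4*L)))]
  have hqS : (1 - μ/(4*Ls)) ≤ Real.exp (-(μ/(4*Ls))) := by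
    linarith [Real.add_one_le_exp (-(μ/(4*Ls)))]
  have hpow : ∀ t : ℕ, ‖w t - wstar‖ ^ 2 ≤ Real.exp (-(μ/(4*L)*t)) * R := by
    intro t
    induction t with
    | zero => simp [hRdef]
    | succ t ih =>
      calc ‖w (t+1) - wstar‖ ^ 2 ≤ (1 - μ/(4*L)) * ‖w t - wstar‖ ^ 2 := hΦglob t
      _ ≤ Real.exp (-(μ/(4*L))) * ‖w t - wstar‖ ^ 2 :=
          mul_le_mul_of_nonneg_right hqL (sq_nonneg _)
      _ ≤ Real.exp (-(μ/(4*L))) * (Real.exp (-(μ/(4*L)*t)) * R) :=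
          mul_le_mul_of_nonneg_left ih (Real.exp_pos _).le
      _ = Real.exp (-(μ/(4*L)*(t+1:ℕ))) * R := by
          rw [← mul_assoc, ← Real.exp_add]
          push_cast
          ring_nf
  -- common conclusion helpers
  have conclude : ∀ (x : EuclideanSpace ℝ (Fin d)) (B : ℝ), ‖x - wstar‖ ^ 2 ≤ B →
      Ls/2 * B ≤ ε → f x - fstar ≤ ε := by
    intro x B hB hBe
    have h1 : Ls/2 * ‖x - wstar‖ ^ 2 ≤ ε :=
      le_trans (mul_le_mul_of_nonneg_left hB (by positivity)) hBe
    have h2 : f x - f wstar ≤ δ :=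
      ball_sublevel f f' Ls δ μ hLs hμ hδpos wstar hdiff hcont hloc' hsc hgrad0 x
        (by linarith)
    have h3 := descent_local f f' Ls δ μ (f wstar) hLs hμ hδpos.le hdiff hcont hloc' hsc
      wstar x (by rw [sub_self]; exact hδpos.le) h2
    rw [hgrad0, inner_zero_left] at h3
    rw [← hfw]
    linarith
  have expbound : ∀ W : ℝ, lS + lR - (l2 + lε) ≤ W →
      Ls/2 * (Real.exp (-W) * R) ≤ ε := by
    intro W hW
    have h0 : Real.exp (-W) ≤ Real.exp (-(lS + lR - (l2 + lε))) :=
      Real.exp_le_exp.mpr (by linarith)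
    have h1 : Real.exp (-(lS + lR - (l2 + lε))) = 2*ε/(Ls*R) := by
      rw [← e₅, Real.exp_neg, Real.exp_log (by positivity), inv_div]
    rw [h1] at h0
    have h2 : Real.exp (-W) * R ≤ (2*ε/(Ls*R)) * R :=
      mul_le_mul_of_nonneg_right h0 hRpos.le
    have h3 : (2*ε/(Ls*R)) * R = 2*ε/Ls := by field_simp
    have h4 : Ls/2 * (2*ε/Ls) = ε := by field_simp
    calc Ls/2 * (Real.exp (-W) * R) ≤ Ls/2 * (2*ε/(Ls*R) * R) :=
        mul_le_mul_of_nonneg_left h2 (by positivity)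
    _ = ε := by rw [h3, h4]
  rcases le_total L Ls with hcase | hcase
  · -- Case L ≤ Ls : use global rate throughout
    have hlog_LS : lL ≤ lS := by
      rw [hlLdef, hlSdef]
      exact (Real.log_le_log_iff hL hLs).mpr hcase
    have i1 : μ/(4*L) * x₁ = lL + lR - (l2 + lδ) := by
      rw [hx₁def, e₁]; field_simp
    have i2 : μ/(4*L) * x₂ = Ls/L * (lS + lδ - (lL + lε)) := by
      rw [hx₂def, e₂]; field_simp
    have hp : 0 ≤ (1 - Ls/L) * ((lL - lS) - (lδ - lε)) := by
      have hA : 1 - Ls/L ≤ 0 := by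
        have : (1:ℝ) ≤ Ls/L := (one_le_div hL).mpr hcase
        linarith
      have hB : (lL - lS) - (lδ - lε) ≤ 0 := by linarith
      nlinarith [mul_nonneg (neg_nonneg.mpr hA) (neg_nonneg.mpr hB)]
    have hnum : lS + lR - (l2 + lε) ≤ μ/(4*L) * T := by
      have hxT : x₁ + x₂ ≤ (T:ℝ) := by linarith [Int.le_ceil x₁, Int.le_ceil x₂]
      have q1 : μ/(4*L)*(x₁ + x₂) ≤ μ/(4*L)*T :=
        mul_le_mul_of_nonneg_left hxT (by positivity)
      have q2 : μ/(4*L)*(x₁+x₂) = (lL+lR-(l2+lδ)) + Ls/L*(lS+lδ-(lL+lε)) := by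
        rw [mul_add, i1, i2]
      linarith [q1, q2, hp]
    exact conclude (w T) (Real.exp (-(μ/(4*L)*T)) * R) (hpow T) (expbound _ hnum)
  · -- Case Ls ≤ L : two-phase analysis
    have hlog_SL : lS ≤ lL := by
      rw [hlLdef, hlSdef]
      exact (Real.log_le_log_iff hLs hL).mpr hcase
    set y₁ := 4*L/μ * (lS + lR - (l2 + lδ)) with hy₁def
    set y₂ := 4*Ls/μ * (lδ - lε) with hy₂def
    have hy₁pos' : 0 < y₁ := mul_pos (by positivity) hy₁pos
    have hy₂pos : 0 < y₂ := mul_pos (by positivity) (by linarith)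
    set N₀ : ℕ := ⌈y₁⌉₊ with hN₀def
    have hNley : y₁ ≤ (N₀:ℝ) := Nat.le_ceil y₁
    have hNlt : (N₀:ℝ) < y₁ + 1 := Nat.ceil_lt_add_one hy₁pos'.le
    have hsle : Ls/L ≤ 1 := (div_le_one hL).mpr hcase
    have hspos : 0 < Ls/L := by positivity
    have hx₁e : x₁ = y₁ + 4*L/μ*(lL - lS) := by
      rw [hx₁def, hy₁def, e₁]; ring
    have ha0 : 0 ≤ 4*L/μ*(lL - lS) := mul_nonneg (by positivity) (by linarith)
    have hx₂e : x₂ = y₂ - (Ls/L)*(4*L/μ*(lL - lS)) := by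
      rw [hx₂def, hy₂def, e₂]; field_simp; ring
    have hNC : (N₀:ℝ) ≤ (⌈x₁⌉:ℝ) := by
      have h1 : ((N₀:ℤ):ℝ) < ((⌈x₁⌉ + 1 : ℤ):ℝ) := by
        push_cast
        linarith [Int.le_ceil x₁, hNlt, hx₁e, ha0]
      have h2 : (N₀:ℤ) < ⌈x₁⌉ + 1 := by exact_mod_cast h1
      have h3 : (N₀:ℤ) ≤ ⌈x₁⌉ := Int.lt_add_one_iff.mp h2
      exact_mod_cast h3
    have K1 : (1 - Ls/L)*(N₀:ℝ) + (Ls/L)*y₁ + y₂ ≤ (T:ℝ) := by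
      have p1 : 0 ≤ (1 - Ls/L)*((⌈x₁⌉:ℝ) - N₀) := mul_nonneg (by linarith) (by linarith)
      have p2 : 0 ≤ (Ls/L)*((⌈x₁⌉:ℝ) - x₁) :=
        mul_nonneg hspos.le (by linarith [Int.le_ceil x₁])
      have hsx : (Ls/L)*x₁ = (Ls/L)*y₁ + (Ls/L)*(4*L/μ*(lL - lS)) := by
        rw [hx₁e]; ring
      linarith [hTr, Int.le_ceil x₂, hx₂e, p1, p2, hsx]
    have p3 : 0 ≤ (Ls/L)*((y₁+1) - N₀) := mul_nonneg hspos.le (by linarith)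
    have K2r : (N₀:ℝ) < (T:ℝ) + 1 := by linarith [K1, p3, hy₂pos, hsle]
    have K2 : N₀ ≤ T := by
      have : N₀ < T + 1 := by exact_mod_cast K2r
      omega
    have hentry : Real.exp (-(μ/(4*L)*N₀)) * R ≤ 2*δ/Ls := by
      have hy1id : μ/(4*L)*y₁ = lS + lR - (l2 + lδ) := by
        rw [hy₁def]; field_simp
      have h1 : lS + lR - (l2 + lδ) ≤ μ/(4*L)*N₀ := by
        have := mul_le_mul_of_nonneg_left hNley (by positivity : (0:ℝ) ≤ μ/(4*L))
        linarith [hy1id]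
      have h2 : Real.exp (-(μ/(4*L)*N₀)) ≤ Real.exp (-(lS + lR - (l2 + lδ))) :=
        Real.exp_le_exp.mpr (by linarith)
      have h3 : Real.exp (-(lS + lR - (l2 + lδ))) = 2*δ/(Ls*R) := by
        rw [← e₃, Real.exp_neg, Real.exp_log (by positivity), inv_div]
      rw [h3] at h2
      calc Real.exp (-(μ/(4*L)*N₀)) * R ≤ (2*δ/(Ls*R))*R :=
          mul_le_mul_of_nonneg_right h2 hRpos.le
      _ = 2*δ/Ls := by field_simp
    have hind : ∀ k : ℕ, ‖w (N₀+k) - wstar‖ ^ 2 ≤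
        Real.exp (-(μ/(4*Ls)*k)) * (Real.exp (-(μ/(4*L)*N₀)) * R) := by
      intro k
      induction k with
      | zero => simpa using hpow N₀
      | succ k ih =>
        have hsub : ‖w (N₀+k) - wstar‖ ^ 2 ≤ 2*δ/Ls := by
          calc ‖w (N₀+k) - wstar‖ ^ 2
              ≤ Real.exp (-(μ/(4*Ls)*k)) * (Real.exp (-(μ/(4*L)*N₀)) * R) := ih
          _ ≤ 1 * (Real.exp (-(μ/(4*L)*N₀)) * R) := by
              apply mul_le_mul_of_nonneg_right _ (by positivity)
              exact Real.exp_le_one_iff.mpr (neg_nonpos.mpr (by positivity))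
          _ ≤ 2*δ/Ls := by rw [one_mul]; exact hentry
        have hΔk : f (w (N₀+k)) - f wstar ≤ δ := by
          apply ball_sublevel f f' Ls δ μ hLs hμ hδpos wstar hdiff hcont hloc' hsc
            hgrad0 (w (N₀+k))
          have := mul_le_mul_of_nonneg_left hsub (by positivity : (0:ℝ) ≤ Ls/2)
          have heq : Ls/2 * (2*δ/Ls) = δ := by field_simp
          linarith
        calc ‖w (N₀+(k+1)) - wstar‖ ^ 2
            ≤ (1 - μ/(4*Ls)) * ‖w (N₀+k) - wstar‖ ^ 2 := hΦloc (N₀+k) hΔk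
        _ ≤ Real.exp (-(μ/(4*Ls))) * ‖w (N₀+k) - wstar‖ ^ 2 :=
            mul_le_mul_of_nonneg_right hqS (sq_nonneg _)
        _ ≤ Real.exp (-(μ/(4*Ls))) *
            (Real.exp (-(μ/(4*Ls)*k)) * (Real.exp (-(μ/(4*L)*N₀)) * R)) :=
            mul_le_mul_of_nonneg_left ih (Real.exp_pos _).le
        _ = Real.exp (-(μ/(4*Ls)*(k+1:ℕ))) * (Real.exp (-(μ/(4*L)*N₀)) * R) := by
            rw [← mul_assoc, ← mul_assoc, ← Real.exp_add]
            push_cast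
            ring_nf
    set k := T - N₀ with hkdef
    have hTk : T = N₀ + k := by omega
    have hkr : (k:ℝ) = (T:ℝ) - N₀ := by
      rw [hkdef]
      push_cast [Nat.cast_sub K2]
      ring
    have hnum : lS + lR - (l2 + lε) ≤ μ/(4*Ls)*k + μ/(4*L)*N₀ := by
      have q1 := mul_le_mul_of_nonneg_left K1 (by positivity : (0:ℝ) ≤ μ/(4*Ls))
      have i1 : μ/(4*Ls)*((Ls/L)*y₁) = lS + lR - (l2 + lδ) := by
        rw [hy₁def]; field_simp
      have i2 : μ/(4*Ls)*y₂ = lδ - lε := by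
        rw [hy₂def]; field_simp
      have i3 : μ/(4*Ls)*((1 - Ls/L)*(N₀:ℝ)) = μ/(4*Ls)*N₀ - μ/(4*L)*N₀ := by
        field_simp
      have q2 : μ/(4*Ls)*((1 - Ls/L)*(N₀:ℝ) + (Ls/L)*y₁ + y₂)
          = μ/(4*Ls)*N₀ - μ/(4*L)*N₀ + (lS+lR-(l2+lδ)) + (lδ-lε) := by
        rw [mul_add, mul_add, i1, i2, i3]
      have q3 : μ/(4*Ls)*(k:ℝ) = μ/(4*Ls)*T - μ/(4*Ls)*N₀ := by rw [hkr]; ring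
      linarith [q1, q2, q3]
    have hcomb : Real.exp (-(μ/(4*Ls)*k)) * (Real.exp (-(μ/(4*L)*N₀)) * R)
        = Real.exp (-(μ/(4*Ls)*k + μ/(4*L)*N₀)) * R := by
      rw [← mul_assoc, ← Real.exp_add]
      ring_nf
    have hfin := expbound _ hnum
    rw [hTk]
    exact conclude (w (N₀+k)) _ (hcomb ▸ hind k) hfin
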